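/- With notation as in the formal Demazure calculus, δ_{s_α} = δ_e − x_α X_α in Q_W; consequently the S-subalgebra D_F of Q_W generated by S and the elements X_α (α a root) contains the twisted group algebra S_W. -/

import Mathlib

/-!
STATEMENT 8: In the formal Demazure calculus, δ_{s_α} = δ_e − x_α X_α in Q_W;
consequently the S-subalgebra D_F of Q_W generated by (the image of) S and the
formal Demazure elements X_α contains the twisted group algebra S_W, i.e. all
elements q δ_w with q ∈ S, w ∈ W.
Setting: S = R[[Λ]]_F with W its Weyl group, generated by the reflections s_α;
Q the localization of S at all x_α (so each x_α becomes a unit); Q_W is modelled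
as `W → Q` with the twisted multiplication.  D_F is realized as the additive
closure of the set of products of the generators (scalars q δ_e, q ∈ S, and the
elements X_α), which is exactly the subring they generate.
-/

noncomputable section
open scoped Classical

def twMul {Q : Type*} [CommRing Q] {W : Type*} [Group W] [Fintype W]
    (φ : W →* RingAut Q) (f g : W → Q) : W → Q :=
  fun w => ∑ u : W, f u * φ u (g (u⁻¹ * w))

def tdelta {Q : Type*} [CommRing Q] {W : Type*} [Group W] (w : W) (q : Q) : W → Q :=
  fun v => if v = w then q else 0

/-- The formal Demazure element `X_α = (1/x_α) δ_e − (1/x_α) δ_{s_α}`. -/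
def Xdem {S Q : Type*} [CommRing S] [CommRing Q] [Algebra S Q] {W : Type*} [Group W]
    (xα : S) (sα : W) : W → Q :=
  tdelta (1 : W) (Ring.inverse (algebraMap S Q xα))
    - tdelta sα (Ring.inverse (algebraMap S Q xα))

/-- `D_F`: the subring of `Q_W` generated by the scalars `q δ_e` (q ∈ S) and the
Demazure elements, realized as the additive subgroup generated by all finite
(twisted) products of these generators. -/
def DF {S Q : Type*} [CommRing S] [CommRing Q] [Algebra S Q] {W A : Type*}
    [Group W] [Fintype W] (φ : W →* RingAut Q) (xs : A → S) (sA : A → W) :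
    AddSubgroup (W → Q) :=
  AddSubgroup.closure
    {z : W → Q | ∃ l : List (W → Q),
      (∀ y ∈ l, (∃ q : S, y = tdelta (1 : W) (algebraMap S Q q)) ∨
        (∃ i : A, y = Xdem (xs i) (sA i))) ∧
      z = l.foldr (twMul φ) (tdelta (1 : W) (1 : Q))}

section aux

variable {Q : Type*} [CommRing Q] {W : Type*} [Group W] [Fintype W]
  (φ : W →* RingAut Q)

lemma RingAut_one_apply {Q : Type*} [CommRing Q] (x : Q) : (1 : RingAut Q) x = x := rfl

lemma twMul_tdelta (w v : W) (q p : Q) :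
    twMul φ (tdelta w q) (tdelta v p) = tdelta (w * v) (q * φ w p) := by
  funext x
  simp only [twMul, tdelta, ite_mul, zero_mul, Finset.sum_ite_eq', Finset.mem_univ, if_true]
  by_cases h : w⁻¹ * x = v
  · have hx : x = w * v := by rw [← h, mul_inv_cancel_left]
    simp [h, hx]
  · have hx : x ≠ w * v := by
      intro hxx
      exact h (by rw [hxx, inv_mul_cancel_left])
    simp [h, hx]

lemma twMul_one_left (g : W → Q) : twMul φ (tdelta (1 : W) (1 : Q)) g = g := by
  funext x
  simp [twMul, tdelta, ite_mul, RingAut_one_apply]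

lemma twMul_one_right (f : W → Q) : twMul φ f (tdelta (1 : W) (1 : Q)) = f := by
  funext x
  have : ∀ u : W, (u⁻¹ * x = 1) = (u = x) := by
    intro u
    simp [inv_mul_eq_one, eq_comm]
  simp only [twMul, tdelta, this]
  simp [mul_ite]

lemma twMul_assoc (f g h : W → Q) :
    twMul φ (twMul φ f g) h = twMul φ f (twMul φ g h) := by
  funext w
  simp only [twMul, Finset.sum_mul, map_sum, Finset.mul_sum, map_mul]
  rw [Finset.sum_comm]
  refine Finset.sum_congr rfl fun v _ => ?_
  have hφ : ∀ (a b : W) (z : Q), φ a (φ b z) = φ (a * b) z := by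
    intro a b z
    rw [map_mul φ]
    rfl
  refine Fintype.sum_equiv (Equiv.mulLeft v⁻¹) _ _ fun u => ?_
  simp only [Equiv.coe_mulLeft]
  have h1 : (v⁻¹ * u)⁻¹ * (v⁻¹ * w) = u⁻¹ * w := by group
  rw [h1, hφ v (v⁻¹ * u), mul_inv_cancel_left, mul_assoc]

lemma twMul_add_left (f g h : W → Q) :
    twMul φ (f + g) h = twMul φ f h + twMul φ g h := by
  funext w; simp [twMul, add_mul, Finset.sum_add_distrib]

lemma twMul_add_right (f g h : W → Q) :
    twMul φ f (g + h) = twMul φ f g + twMul φ f h := by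
  funext w; simp [twMul, mul_add, Finset.sum_add_distrib]

lemma twMul_neg_left (f g : W → Q) : twMul φ (-f) g = -twMul φ f g := by
  funext w; simp [twMul, Finset.sum_neg_distrib]

lemma twMul_neg_right (f g : W → Q) : twMul φ f (-g) = -twMul φ f g := by
  funext w; simp [twMul, Finset.sum_neg_distrib]

lemma twMul_zero_left (g : W → Q) : twMul φ (0 : W → Q) g = 0 := by
  funext w; simp [twMul]

lemma twMul_zero_right (f : W → Q) : twMul φ f (0 : W → Q) = 0 := by
  funext w; simp [twMul]

lemma twMul_sub_right (f g h : W → Q) :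
    twMul φ f (g - h) = twMul φ f g - twMul φ f h := by
  rw [sub_eq_add_neg, twMul_add_right, twMul_neg_right, sub_eq_add_neg]

lemma foldr_twMul (l : List (W → Q)) (x : W → Q) :
    l.foldr (twMul φ) x = twMul φ (l.foldr (twMul φ) (tdelta (1 : W) (1 : Q))) x := by
  induction l with
  | nil => simp [twMul_one_left]
  | cons a l ih => simp [List.foldr_cons, ih, twMul_assoc]

end aux

section aux2

variable {S Q : Type*} [CommRing S] [CommRing Q] [Algebra S Q] {W A : Type*}
  [Group W] [Fintype W] (φ : W →* RingAut Q) (xs : A → S) (sA : A → W)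

lemma DF_mul_mem {a b : W → Q} (ha : a ∈ DF φ xs sA) (hb : b ∈ DF φ xs sA) :
    twMul φ a b ∈ DF φ xs sA := by
  induction ha using AddSubgroup.closure_induction with
  | mem x hx =>
    induction hb using AddSubgroup.closure_induction with
    | mem y hy =>
      obtain ⟨l₁, hl₁, rfl⟩ := hx
      obtain ⟨l₂, hl₂, rfl⟩ := hy
      apply AddSubgroup.subset_closure
      refine ⟨l₁ ++ l₂, fun y hy => ?_, ?_⟩
      · rcases List.mem_append.1 hy with h | h
        · exact hl₁ y h
        · exact hl₂ y h
      · rw [List.foldr_append]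
        exact (foldr_twMul φ l₁ _).symm
    | zero => rw [twMul_zero_right]; exact zero_mem _
    | add y z _ _ hy hz => rw [twMul_add_right]; exact add_mem hy hz
    | neg y _ hy => rw [twMul_neg_right]; exact neg_mem hy
  | zero => rw [twMul_zero_left]; exact zero_mem _
  | add x y _ _ hx hy => rw [twMul_add_left]; exact add_mem hx hy
  | neg x _ hx => rw [twMul_neg_left]; exact neg_mem hx

lemma one_mem_DF : tdelta (1 : W) (1 : Q) ∈ DF φ xs sA :=
  AddSubgroup.subset_closure ⟨[], by simp, by simp⟩

lemma scalar_mem_DF (q : S) : tdelta (1 : W) (algebraMap S Q q) ∈ DF φ xs sA := by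
  apply AddSubgroup.subset_closure
  refine ⟨[tdelta (1 : W) (algebraMap S Q q)], ?_, ?_⟩
  · intro y hy
    simp only [List.mem_singleton] at hy
    subst hy
    exact Or.inl ⟨q, rfl⟩
  · simp [List.foldr_cons, twMul_one_right]

end aux2

theorem delta_s_eq_and_SW_subset_DF
    {S Q : Type*} [CommRing S] [CommRing Q] [Algebra S Q] {W A : Type*}
    [Group W] [Fintype W]
    (φ : W →* RingAut Q)
    (xs : A → S) (sA : A → W)
    -- each x_α is invertible in the localization Q
    (hunit : ∀ i : A, IsUnit (algebraMap S Q (xs i)))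
    -- W is generated by the reflections s_α
    (hgen : Subgroup.closure (Set.range sA) = ⊤) :
    -- δ_{s_α} = δ_e − x_α X_α
    (∀ i : A, tdelta (sA i) (1 : Q) =
        tdelta (1 : W) (1 : Q)
          - twMul φ (tdelta (1 : W) (algebraMap S Q (xs i))) (Xdem (xs i) (sA i))) ∧
    (∀ (w : W) (q : S), tdelta w (algebraMap S Q q) ∈ DF φ xs sA) := by
  have key : ∀ i : A, tdelta (sA i) (1 : Q) =
      tdelta (1 : W) (1 : Q)
        - twMul φ (tdelta (1 : W) (algebraMap S Q (xs i))) (Xdem (xs i) (sA i)) := by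
    intro i
    have hinv : algebraMap S Q (xs i) * Ring.inverse (algebraMap S Q (xs i)) = 1 :=
      Ring.mul_inverse_cancel _ (hunit i)
    rw [Xdem, twMul_sub_right, twMul_tdelta, twMul_tdelta]
    simp only [map_one, one_mul, RingAut_one_apply, hinv]
    abel
  refine ⟨key, ?_⟩
  -- membership of δ_{s_α} in D_F
  have hXmem : ∀ i : A, twMul φ (tdelta (1 : W) (algebraMap S Q (xs i)))
      (Xdem (xs i) (sA i)) ∈ DF φ xs sA := by
    intro i
    apply AddSubgroup.subset_closure
    refine ⟨[tdelta (1 : W) (algebraMap S Q (xs i)), Xdem (xs i) (sA i)], ?_, ?_⟩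
    · intro y hy
      simp only [List.mem_cons, List.mem_singleton, List.not_mem_nil, or_false] at hy
      rcases hy with rfl | rfl
      · exact Or.inl ⟨xs i, rfl⟩
      · exact Or.inr ⟨i, rfl⟩
    · simp [List.foldr_cons, twMul_one_right]
  have hs : ∀ i : A, tdelta (sA i) (1 : Q) ∈ DF φ xs sA := by
    intro i
    rw [key i]
    exact sub_mem (one_mem_DF φ xs sA) (hXmem i)
  -- the submonoid of w with δ_w ∈ D_F
  let T : Submonoid W :=
    { carrier := {w : W | tdelta w (1 : Q) ∈ DF φ xs sA}
      one_mem' := one_mem_DF φ xs sA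
      mul_mem' := by
        intro a b ha hb
        have : tdelta (a * b) (1 : Q) = twMul φ (tdelta a (1 : Q)) (tdelta b (1 : Q)) := by
          rw [twMul_tdelta]; simp
        rw [Set.mem_setOf_eq, this]
        exact DF_mul_mem φ xs sA ha hb }
  have hT : ∀ w : W, w ∈ T := by
    intro w
    have hw : w ∈ Subgroup.closure (Set.range sA) := by rw [hgen]; trivial
    induction hw using Subgroup.closure_induction with
    | mem x hx => obtain ⟨i, rfl⟩ := hx; exact hs i
    | one => exact T.one_mem
    | mul x y _ _ hx hy => exact T.mul_mem hx hy
    | inv x _ hx =>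
      have hpos : 0 < orderOf x := orderOf_pos x
      have hxinv : x⁻¹ = x ^ (orderOf x - 1) := by
        symm
        apply eq_inv_of_mul_eq_one_right
        rw [← pow_succ', Nat.sub_add_cancel hpos, pow_orderOf_eq_one]
      rw [hxinv]
      exact pow_mem hx _
  intro w q
  have : tdelta w (algebraMap S Q q)
      = twMul φ (tdelta (1 : W) (algebraMap S Q q)) (tdelta w (1 : Q)) := by
    rw [twMul_tdelta]; simp
  rw [this]
  exact DF_mul_mem φ xs sA (scalar_mem_DF φ xs sA q) (hT w)

end
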